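/- Let n, m be positive integers with n ≤ m. Then n·⌈log₂(m/n)⌉ + 2n ≤ log₂ C(m,n) + 3n, where C(m,n) is the binomial coefficient 'm choose n'. That is, the Elias-Fano space bound exceeds the information-theoretic minimum log₂ C(m,n) by at most 3n bits. -/

import Mathlib

open Finset in
lemma pow_div_le_choose_aux (n m : ℕ) (hn : 0 < n) (hnm : n ≤ m) :
    ((m : ℝ) / n) ^ n ≤ (m.choose n : ℝ) := by
  have hmn0 : (0:ℝ) < (m:ℝ)/n := by
    have h1 : (0:ℝ) < m := by exact_mod_cast lt_of_lt_of_le hn hnm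
    have h2 : (0:ℝ) < n := by exact_mod_cast hn
    positivity
  have hnpos : (0:ℝ) < n := by exact_mod_cast hn
  have hfac : (0:ℝ) < (n.factorial : ℝ) := by exact_mod_cast n.factorial_pos
  rw [← mul_le_mul_iff_right₀ hfac]
  have h1 : (n.factorial : ℝ) * (m.choose n : ℝ) = (m.descFactorial n : ℝ) := by
    rw [← Nat.cast_mul, ← Nat.descFactorial_eq_factorial_mul_choose]
  have h2 : (m.descFactorial n : ℝ) = ∏ i ∈ range n, ((m : ℝ) - i) := by
    rw [Nat.descFactorial_eq_prod_range, Nat.cast_prod]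
    refine Finset.prod_congr rfl fun i hi => ?_
    have : i ≤ m := le_trans (le_of_lt (mem_range.mp hi)) hnm
    push_cast [this]
    ring
  have h3 : (n.factorial : ℝ) = ∏ i ∈ range n, ((n : ℝ) - i) := by
    have := Nat.descFactorial_eq_prod_range n n
    rw [Nat.descFactorial_self] at this
    rw [this, Nat.cast_prod]
    refine Finset.prod_congr rfl fun i hi => ?_
    have : i ≤ n := le_of_lt (mem_range.mp hi)
    push_cast [this]
    ring
  rw [h1, h2]
  calc (n.factorial : ℝ) * ((m : ℝ) / n) ^ n
      = ∏ i ∈ range n, ((m : ℝ) / n * ((n : ℝ) - i)) := by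
        rw [Finset.prod_mul_distrib, Finset.prod_const, ← h3, Finset.card_range]; ring
    _ ≤ ∏ i ∈ range n, ((m : ℝ) - i) := by
        refine Finset.prod_le_prod (fun i hi => ?_) (fun i hi => ?_)
        · have hi' : (i:ℝ) < n := by exact_mod_cast mem_range.mp hi
          have h0 : (0:ℝ) ≤ (n:ℝ) - i := by linarith
          exact mul_nonneg (le_of_lt hmn0) h0
        · have hi' : (i:ℝ) < n := by exact_mod_cast mem_range.mp hi
          rw [div_mul_eq_mul_div, div_le_iff₀ hnpos]
          have hmn : (n:ℝ) ≤ m := by exact_mod_cast hnm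
          have hmn' : (n:ℝ) ≤ m := by exact_mod_cast hnm
          have h0 : (0:ℝ) ≤ i := by positivity
          nlinarith

/-- The Elias-Fano space bound exceeds the information-theoretic minimum
`log₂ C(m,n)` by at most `3n` bits. -/
theorem eliasFano_vs_info_theoretic (n m : ℕ) (hn : 0 < n) (hnm : n ≤ m) :
    (n : ℝ) * (⌈Real.logb 2 ((m : ℝ) / n)⌉ : ℝ) + 2 * n ≤
      Real.logb 2 (m.choose n : ℝ) + 3 * n := by
  have hnpos : (0:ℝ) < n := by exact_mod_cast hn
  have hmn : (0:ℝ) < (m:ℝ)/n := by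
    have : (0:ℝ) < m := by exact_mod_cast lt_of_lt_of_le hn hnm
    positivity
  have hkey : ((m : ℝ) / n) ^ n ≤ (m.choose n : ℝ) := pow_div_le_choose_aux n m hn hnm
  have hlog : (n:ℝ) * Real.logb 2 ((m:ℝ)/n) ≤ Real.logb 2 (m.choose n : ℝ) := by
    rw [← Real.logb_pow]
    exact Real.logb_le_logb_of_le one_lt_two (by positivity) hkey
  have hceil : (⌈Real.logb 2 ((m : ℝ) / n)⌉ : ℝ) ≤ Real.logb 2 ((m:ℝ)/n) + 1 :=
    le_of_lt (Int.ceil_lt_add_one _)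
  nlinarith [mul_le_mul_of_nonneg_left hceil (le_of_lt hnpos)]
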